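/- arXiv:1210.7105 — 3 statements merged into one kernel-verified Lean document; each statement's English description precedes it below -/
import Mathlib

section
/- The Hartogs triangle T = {(z₁,z₂) ∈ ℂ² : |z₁| < |z₂| < 1} does not have the segment property; that is, there is no neighbourhood U of the boundary point 0 and nonzero vector w ∈ ℂ² such that z + t·w ∈ T for every z in the closure of T intersected with U and every 0 < t < 1. -/
open Set

/-- The Hartogs triangle. -/
def HartogsTriangle : Set (ℂ × ℂ) :=
  {z : ℂ × ℂ | ‖z.1‖ < ‖z.2‖ ∧ ‖z.2‖ < 1}

lemma zero_mem_closure_hartogs : (0 : ℂ × ℂ) ∈ closure HartogsTriangle := by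
  have ht : Filter.Tendsto (fun t : ℝ => (((0:ℂ)), ((t:ℂ)))) (nhdsWithin 0 (Set.Ioi 0))
      (nhds (0 : ℂ × ℂ)) := by
    have : Continuous (fun t : ℝ => (((0:ℂ)), ((t:ℂ)))) := by continuity
    have := this.tendsto' 0 (0 : ℂ × ℂ) (by simp)
    exact this.mono_left nhdsWithin_le_nhds
  refine mem_closure_of_tendsto ht ?_
  filter_upwards [Ioo_mem_nhdsGT_of_mem (by constructor <;> norm_num : (0:ℝ) ∈ Set.Ico 0 1)] with t ht
  simp only [HartogsTriangle, mem_setOf_eq, norm_zero, Complex.norm_real, Real.norm_eq_abs]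
  constructor
  · rw [abs_of_pos ht.1]; exact ht.1
  · rw [abs_of_pos ht.1]; exact ht.2

lemma diag_mem_closure_hartogs (c : ℂ) (h0 : c ≠ 0) (h1 : ‖c‖ < 1) :
    (c, c) ∈ closure HartogsTriangle := by
  have ht : Filter.Tendsto (fun t : ℝ => (((t:ℂ) * c), c)) (nhdsWithin 1 (Set.Iio 1))
      (nhds ((c, c) : ℂ × ℂ)) := by
    have : Continuous (fun t : ℝ => (((t:ℂ) * c), c)) := by continuity
    have := this.tendsto' 1 ((c, c) : ℂ × ℂ) (by simp)
    exact this.mono_left nhdsWithin_le_nhds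
  refine mem_closure_of_tendsto ht ?_
  filter_upwards [Ioo_mem_nhdsLT_of_mem (by constructor <;> norm_num : (1:ℝ) ∈ Set.Ioc 0 1)] with t ht
  have hc : 0 < ‖c‖ := by simpa [norm_pos_iff] using h0
  simp only [HartogsTriangle, mem_setOf_eq, norm_mul, Complex.norm_real, Real.norm_eq_abs]
  refine ⟨?_, h1⟩
  calc |t| * ‖c‖ < 1 * ‖c‖ := by
        apply mul_lt_mul_of_pos_right _ hc
        rw [abs_of_pos ht.1]; exact ht.2
    _ = ‖c‖ := one_mul _

/-- The Hartogs triangle does not have the segment property at the boundary point `0`: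
there is no neighbourhood `U` of `0` and nonzero vector `w ∈ ℂ²` such that
`z + t • w ∈ T` for all `z ∈ closure T ∩ U` and all `0 < t < 1`. -/
theorem hartogs_triangle_not_segment_property :
    ¬ ∃ (U : Set (ℂ × ℂ)) (w : ℂ × ℂ), IsOpen U ∧ (0 : ℂ × ℂ) ∈ U ∧ w ≠ 0 ∧
      ∀ z ∈ closure HartogsTriangle ∩ U, ∀ t : ℝ, 0 < t → t < 1 →
        z + (t : ℂ) • w ∈ HartogsTriangle := by
  rintro ⟨U, w, hU, h0U, -, h⟩
  -- From z = 0, t = 1/2 : |w₁| < |w₂| < 2, in particular w₂ ≠ 0 and |w₂| < 2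
  have key := h 0 ⟨zero_mem_closure_hartogs, h0U⟩ (1/2) (by norm_num) (by norm_num)
  simp only [HartogsTriangle, mem_setOf_eq, zero_add, Prod.smul_fst, Prod.smul_snd,
    smul_eq_mul, norm_mul] at key
  have hw2 : w.2 ≠ 0 := by
    intro h2
    rw [h2] at key
    simp at key
    nlinarith [norm_nonneg w.1, key]
  have hw2pos : 0 < ‖w.2‖ := norm_pos_iff.mpr hw2
  have hw2lt : ‖w.2‖ < 2 := by
    have h2 := key.2
    rw [show ‖((1/2 : ℝ) : ℂ)‖ = 1/2 by
      rw [Complex.norm_real, Real.norm_eq_abs]; norm_num] at h2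
    linarith
  -- choose small t
  obtain ⟨ε, hε, hball⟩ := Metric.isOpen_iff.mp hU 0 h0U
  set t : ℝ := min (1/2) (ε / (2 * (‖w.2‖ + 1))) with htdef
  have ht0 : 0 < t := lt_min (by norm_num) (by positivity)
  have ht1 : t < 1 := lt_of_le_of_lt (min_le_left _ _) (by norm_num)
  set c : ℂ := -(t : ℂ) * w.2 with hcdef
  have hcabs : ‖c‖ = t * ‖w.2‖ := by
    rw [hcdef, norm_mul, norm_neg, Complex.norm_real, Real.norm_eq_abs, abs_of_pos ht0]
  have hc0 : c ≠ 0 := by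
    rw [hcdef]
    exact mul_ne_zero (by simpa using ne_of_gt ht0) hw2
  have hc1 : ‖c‖ < 1 := by
    rw [hcabs]
    calc t * ‖w.2‖ ≤ (1/2) * ‖w.2‖ :=
          mul_le_mul_of_nonneg_right (min_le_left _ _) hw2pos.le
      _ < (1/2) * 2 := by linarith
      _ = 1 := by norm_num
  have hcU : ((c, c) : ℂ × ℂ) ∈ U := by
    apply hball
    have hd : dist ((c, c) : ℂ × ℂ) 0 = ‖c‖ := by
      rw [dist_zero_right]
      simp [Prod.norm_def]
    rw [Metric.mem_ball, hd, hcabs]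
    calc t * ‖w.2‖ ≤ (ε / (2 * (‖w.2‖ + 1))) * ‖w.2‖ :=
          mul_le_mul_of_nonneg_right (min_le_right _ _) hw2pos.le
      _ < ε := by
          rw [div_mul_eq_mul_div, div_lt_iff₀ (by positivity)]
          nlinarith [hε]
  have hz := h (c, c) ⟨diag_mem_closure_hartogs c hc0 hc1, hcU⟩ t ht0 ht1
  simp only [HartogsTriangle, mem_setOf_eq, Prod.mk_add_mk, Prod.smul_fst, Prod.smul_snd,
    smul_eq_mul] at hz
  have h2 : c + (t : ℂ) * w.2 = 0 := by rw [hcdef]; ring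
  have := hz.1
  rw [show ((c, c) : ℂ × ℂ) + (t:ℂ) • w = (c + (t:ℂ) * w.1, c + (t:ℂ) * w.2) by
    simp [Prod.ext_iff, Prod.smul_fst, Prod.smul_snd, smul_eq_mul]] at hz
  rw [show c + (t:ℂ) * w.2 = 0 from h2] at hz
  simp only [norm_zero] at hz
  exact absurd hz.1 (norm_nonneg _).not_gt
end

section
/- Let φ : ℝ^{n-1} → ℝ be Lipschitz with constant C ≥ 1 and let Ω = {x = (x', xₙ) ∈ ℝⁿ : xₙ > φ(x')}. Then for every x ∈ Ω and every ε > 0, one has dist(x, ∂Ω) + ε/(2C) ≤ dist(x + ε·eₙ, ∂Ω) ≤ dist(x, ∂Ω) + ε. -/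
open Set Metric

/-- The projection of `x ∈ ℝ^{n+1}` onto its first `n` coordinates. -/
noncomputable def frontCoords {n : ℕ} (x : EuclideanSpace ℝ (Fin (n + 1))) :
    EuclideanSpace ℝ (Fin n) :=
  WithLp.toLp 2 fun i => x i.castSucc

lemma frontCoords_add {n : ℕ} (a b : EuclideanSpace ℝ (Fin (n + 1))) :
    frontCoords (a + b) = frontCoords a + frontCoords b := rfl

lemma frontCoords_sub {n : ℕ} (a b : EuclideanSpace ℝ (Fin (n + 1))) :
    frontCoords (a - b) = frontCoords a - frontCoords b := rfl

lemma frontCoords_smul {n : ℕ} (t : ℝ) (a : EuclideanSpace ℝ (Fin (n + 1))) :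
    frontCoords (t • a) = t • frontCoords a := rfl

lemma frontCoords_esingle {n : ℕ} (c : ℝ) :
    frontCoords (EuclideanSpace.single (Fin.last n) c) = 0 := by
  ext i
  simp [frontCoords, EuclideanSpace.single_apply, (Fin.castSucc_lt_last i).ne]

lemma frontCoords_normsq {n : ℕ} (z : EuclideanSpace ℝ (Fin (n + 1))) :
    ‖z‖ ^ 2 = ‖frontCoords z‖ ^ 2 + (z (Fin.last n)) ^ 2 := by
  rw [EuclideanSpace.norm_eq, EuclideanSpace.norm_eq,
    Real.sq_sqrt (by positivity), Real.sq_sqrt (by positivity),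
    Fin.sum_univ_castSucc]
  simp [frontCoords, sq_abs]

lemma abs_last_le {n : ℕ} (z : EuclideanSpace ℝ (Fin (n + 1))) :
    |z (Fin.last n)| ≤ ‖z‖ := by
  have h := frontCoords_normsq z
  have h2 : (z (Fin.last n)) ^ 2 ≤ ‖z‖ ^ 2 := by nlinarith [sq_nonneg ‖frontCoords z‖]
  calc |z (Fin.last n)| = Real.sqrt ((z (Fin.last n)) ^ 2) := (Real.sqrt_sq_eq_abs _).symm
    _ ≤ Real.sqrt (‖z‖ ^ 2) := Real.sqrt_le_sqrt h2
    _ = ‖z‖ := Real.sqrt_sq (norm_nonneg z)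

lemma norm_front_le {n : ℕ} (z : EuclideanSpace ℝ (Fin (n + 1))) :
    ‖frontCoords z‖ ≤ ‖z‖ := by
  have h := frontCoords_normsq z
  have h2 : ‖frontCoords z‖ ^ 2 ≤ ‖z‖ ^ 2 := by nlinarith [sq_nonneg (z (Fin.last n))]
  calc ‖frontCoords z‖ = Real.sqrt (‖frontCoords z‖ ^ 2) :=
        (Real.sqrt_sq (norm_nonneg _)).symm
    _ ≤ Real.sqrt (‖z‖ ^ 2) := Real.sqrt_le_sqrt h2
    _ = ‖z‖ := Real.sqrt_sq (norm_nonneg z)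

set_option maxHeartbeats 1000000 in
/-- If `φ : ℝⁿ → ℝ` is Lipschitz with constant `C ≥ 1` and `Ω` is the open region above its
graph, then for every `x ∈ Ω` and `ε > 0`,
`dist(x, ∂Ω) + ε/(2C) ≤ dist(x + ε • e_{n+1}, ∂Ω) ≤ dist(x, ∂Ω) + ε`. -/
theorem dist_translate_lipschitz_supergraph {n : ℕ} (C : ℝ) (hC : 1 ≤ C)
    (φ : EuclideanSpace ℝ (Fin n) → ℝ)
    (hφ : ∀ x y, |φ x - φ y| ≤ C * ‖x - y‖)
    (Ω : Set (EuclideanSpace ℝ (Fin (n + 1))))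
    (hΩ : Ω = {x | φ (frontCoords x) < x (Fin.last n)})
    (x : EuclideanSpace ℝ (Fin (n + 1))) (hx : x ∈ Ω) (ε : ℝ) (hε : 0 < ε) :
    infDist x (frontier Ω) + ε / (2 * C) ≤
        infDist (x + ε • EuclideanSpace.single (Fin.last n) (1 : ℝ)) (frontier Ω) ∧
      infDist (x + ε • EuclideanSpace.single (Fin.last n) (1 : ℝ)) (frontier Ω) ≤
        infDist x (frontier Ω) + ε := by
  have hC0 : (0:ℝ) < C := lt_of_lt_of_le one_pos hC
  set e1 : EuclideanSpace ℝ (Fin (n + 1)) := EuclideanSpace.single (Fin.last n) (1:ℝ)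
    with he1
  have he1norm : ‖e1‖ = 1 := by
    rw [he1, EuclideanSpace.norm_single, norm_one]
  set G : EuclideanSpace ℝ (Fin (n + 1)) → ℝ :=
    fun z => z (Fin.last n) - φ (frontCoords z) with hG
  have hmem : ∀ z, z ∈ Ω ↔ 0 < G z := by
    intro z
    rw [hΩ]
    simp [hG, sub_pos]
  -- adding a multiple of e1 to a point changes G by that amount
  have hGadd : ∀ z c, G (z + c • e1) = G z + c := by
    intro z c
    have h1 : frontCoords (z + c • e1) = frontCoords z := by
      rw [frontCoords_add, frontCoords_smul, he1, frontCoords_esingle, smul_zero, add_zero]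
    have h2 : (z + c • e1) (Fin.last n) = z (Fin.last n) + c := by
      simp [he1, PiLp.add_apply, PiLp.smul_apply, EuclideanSpace.single_apply]
    simp only [hG, h1, h2]
    ring
  -- cone condition
  have hcone : ∀ b k, 0 < G b → C * ‖frontCoords k‖ ≤ k (Fin.last n) → 0 < G (b + k) := by
    intro b k hb hk
    have h1 : frontCoords (b + k) = frontCoords b + frontCoords k := frontCoords_add _ _
    have h2 : φ (frontCoords b + frontCoords k) ≤ φ (frontCoords b) + C * ‖frontCoords k‖ := by
      have h3 := hφ (frontCoords b + frontCoords k) (frontCoords b)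
      rw [add_sub_cancel_left] at h3
      have := (abs_le.mp h3).2
      linarith
    have h4 : (b + k) (Fin.last n) = b (Fin.last n) + k (Fin.last n) := rfl
    simp only [hG, h1, h4] at *
    linarith
  -- continuity of G
  have hφc : Continuous φ := by
    have : LipschitzWith (Real.toNNReal C) φ :=
      LipschitzWith.of_dist_le_mul (fun a b => by
        rw [Real.dist_eq, dist_eq_norm, Real.coe_toNNReal C (le_of_lt hC0)]
        exact hφ a b)
    exact this.continuous
  have hfc : Continuous (frontCoords (n := n)) := by
    have : LipschitzWith 1 (frontCoords (n := n)) :=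
      LipschitzWith.of_dist_le_mul (fun a b => by
        rw [dist_eq_norm, dist_eq_norm, ← frontCoords_sub, NNReal.coe_one, one_mul]
        exact norm_front_le _)
    exact this.continuous
  have hlastc : Continuous (fun z : EuclideanSpace ℝ (Fin (n + 1)) => z (Fin.last n)) := by
    have : LipschitzWith 1 (fun z : EuclideanSpace ℝ (Fin (n + 1)) => z (Fin.last n)) :=
      LipschitzWith.of_dist_le_mul (fun a b => by
        rw [Real.dist_eq, dist_eq_norm, NNReal.coe_one, one_mul]
        exact abs_last_le (a - b))
    exact this.continuous
  have hGc : Continuous G := hlastc.sub (hφc.comp hfc)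
  have hΩopen : IsOpen Ω := by
    rw [hΩ]
    exact isOpen_lt (hφc.comp hfc) hlastc
  -- frontier characterization
  have hfr : frontier Ω = {z | G z = 0} := by
    ext z
    constructor
    · intro hz
      rw [hΩopen.frontier_eq] at hz
      have h1 : z ∈ closure Ω := hz.1
      have h2 : z ∉ Ω := hz.2
      have hcl : closure Ω ⊆ {w | 0 ≤ G w} :=
        closure_minimal (fun w hw => le_of_lt ((hmem w).mp hw))
          (isClosed_le continuous_const hGc)
      have h3 : 0 ≤ G z := hcl h1
      have h4 : ¬ (0 < G z) := fun h => h2 ((hmem z).mpr h)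
      have : G z ≤ 0 := not_lt.mp h4
      exact le_antisymm (by linarith) h3
    · intro hz
      have hz0 : G z = 0 := hz
      rw [hΩopen.frontier_eq]
      constructor
      · rw [Metric.mem_closure_iff]
        intro δ hδ
        refine ⟨z + (δ/2) • e1, (hmem _).mpr ?_, ?_⟩
        · rw [hGadd, hz0, zero_add]
          linarith
        · rw [dist_eq_norm]
          have : z - (z + (δ/2) • e1) = -((δ/2) • e1) := by abel
          rw [this, norm_neg, norm_smul, he1norm, mul_one, Real.norm_eq_abs,
            abs_of_pos (by linarith)]
          linarith
      · intro hzin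
        exact absurd hz0 (ne_of_gt ((hmem z).mp hzin))
  set F : Set (EuclideanSpace ℝ (Fin (n + 1))) := frontier Ω with hF
  have hGx : 0 < G x := (hmem x).mp hx
  -- the point directly below x on the graph
  set p0 : EuclideanSpace ℝ (Fin (n + 1)) := x + (-(G x)) • e1 with hp0
  have hp0F : p0 ∈ F := by
    rw [hfr]
    show G p0 = 0
    rw [hp0, hGadd]
    ring
  have hFne : F.Nonempty := ⟨p0, hp0F⟩
  set d : ℝ := infDist x F with hd
  have hd0 : 0 ≤ d := infDist_nonneg
  have hdle : d ≤ G x := by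
    have h1 : d ≤ dist x p0 := infDist_le_dist_of_mem hp0F
    have h2 : dist x p0 = G x := by
      rw [dist_eq_norm, hp0]
      have : x - (x + (-(G x)) • e1) = (G x) • e1 := by
        rw [neg_smul]; abel
      rw [this, norm_smul, he1norm, mul_one, Real.norm_eq_abs, abs_of_pos hGx]
    linarith
  -- ball of radius d around x is inside Ω
  have hball : ∀ b, ‖b - x‖ < d → 0 < G b := by
    intro b hb
    by_contra hb0
    have hb0' : G b ≤ 0 := not_lt.mp hb0
    set f : ℝ → ℝ := fun t => G (x + t • (b - x)) with hf
    have hfc' : Continuous f := by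
      apply hGc.comp
      exact continuous_const.add (continuous_id.smul continuous_const)
    have hf0 : f 0 = G x := by simp [hf]
    have hf1 : f 1 = G b := by simp [hf]
    have h0mem : (0:ℝ) ∈ Icc (f 1) (f 0) := by
      rw [hf0, hf1]; exact ⟨hb0', le_of_lt hGx⟩
    obtain ⟨t, ht, hft⟩ := intermediate_value_Icc' (by norm_num : (0:ℝ) ≤ 1)
      hfc'.continuousOn h0mem
    set p : EuclideanSpace ℝ (Fin (n + 1)) := x + t • (b - x) with hp
    have hpF : p ∈ F := by
      rw [hfr]
      exact hft
    have h1 : d ≤ dist x p := infDist_le_dist_of_mem hpF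
    have h2 : dist x p = t * ‖b - x‖ := by
      rw [dist_eq_norm, hp]
      have : x - (x + t • (b - x)) = -(t • (b - x)) := by abel
      rw [this, norm_neg, norm_smul, Real.norm_eq_abs, abs_of_nonneg ht.1]
    have h3 : t * ‖b - x‖ ≤ ‖b - x‖ := by
      nlinarith [norm_nonneg (b - x), ht.1, ht.2]
    linarith
  -- key lower bound
  have hkey : ∀ y ∈ F, d + ε / (2 * C) ≤ dist (x + ε • e1) y := by
    intro y hy
    by_contra hlt
    push_neg at hlt
    set ε' : ℝ := ε / (2 * C) with hε'
    have hε'0 : 0 < ε' := by positivity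
    set v : EuclideanSpace ℝ (Fin (n + 1)) := y - (x + ε • e1) with hv
    have hvnorm : ‖v‖ < d + ε' := by
      have : dist (x + ε • e1) y = ‖v‖ := by
        rw [dist_eq_norm, hv, ← norm_neg]
        congr 1
        abel
      linarith [this ▸ hlt]
    have hde : 0 < d + ε' := by linarith
    set s : ℝ := d / (d + ε') with hs
    have hs0 : 0 ≤ s := div_nonneg hd0 (le_of_lt hde)
    have hs1 : s ≤ 1 := by
      rw [hs, div_le_one hde]; linarith
    have h1s : 1 - s = ε' / (d + ε') := by
      rw [hs]; field_simp; ring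
    set b : EuclideanSpace ℝ (Fin (n + 1)) := x + s • v with hb
    have hbΩ : 0 < G b := by
      rcases eq_or_lt_of_le hd0 with h | h
      · have hs0' : s = 0 := by rw [hs, ← h, zero_div]
        rw [hb, hs0', zero_smul, add_zero]
        exact hGx
      · apply hball
        have : b - x = s • v := by rw [hb]; abel
        rw [this, norm_smul, Real.norm_eq_abs, abs_of_nonneg hs0]
        calc s * ‖v‖ < s * (d + ε') := by
              apply mul_lt_mul_of_pos_left hvnorm
              rw [hs]; positivity
          _ = d := by rw [hs]; field_simp
    set k : EuclideanSpace ℝ (Fin (n + 1)) := y - b with hk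
    have hksplit : k = (1 - s) • v + ε • e1 := by
      rw [hk, hb, hv]
      module
    have hkfront : ‖frontCoords k‖ ≤ (1 - s) * ‖v‖ := by
      rw [hksplit, frontCoords_add, frontCoords_smul, frontCoords_smul, he1,
        frontCoords_esingle, smul_zero, add_zero, norm_smul, Real.norm_eq_abs,
        abs_of_nonneg (by linarith)]
      have := norm_front_le v
      nlinarith
    have hklast : k (Fin.last n) = (1 - s) * (v (Fin.last n)) + ε := by
      rw [hksplit]
      simp [he1, PiLp.add_apply, PiLp.smul_apply, EuclideanSpace.single_apply]
    have ht : (1 - s) * ‖v‖ < ε' := by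
      rw [h1s]
      calc ε' / (d + ε') * ‖v‖ < ε' / (d + ε') * (d + ε') := by
            apply mul_lt_mul_of_pos_left hvnorm
            positivity
        _ = ε' := by field_simp
    have hvlast : |v (Fin.last n)| ≤ ‖v‖ := abs_last_le v
    have hcone_hyp : C * ‖frontCoords k‖ ≤ k (Fin.last n) := by
      rw [hklast]
      have h1 : C * ‖frontCoords k‖ ≤ C * ((1 - s) * ‖v‖) :=
        mul_le_mul_of_nonneg_left hkfront (le_of_lt hC0)
      have h2 : (1 - s) * (v (Fin.last n)) ≥ -((1 - s) * ‖v‖) := by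
        have := (abs_le.mp hvlast).1
        nlinarith
      have hCT : C * ((1 - s) * ‖v‖) < ε / 2 := by
        have h5 : C * ((1 - s) * ‖v‖) < C * ε' := mul_lt_mul_of_pos_left ht hC0
        have h6 : C * ε' = ε / 2 := by rw [hε']; field_simp
        linarith
      have hT2 : (1 - s) * ‖v‖ < ε / 2 := by
        have h7 : ε' ≤ ε / 2 := by
          rw [hε']
          apply div_le_div_of_nonneg_left (le_of_lt hε) (by norm_num) (by linarith)
        linarith
      linarith
    have hyΩ : 0 < G y := by
      have : y = b + k := by rw [hk]; abel
      rw [this]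
      exact hcone b k hbΩ hcone_hyp
    have hy0 : G y = 0 := by
      rw [hfr] at hy
      exact hy
    linarith
  constructor
  · by_contra hcon
    push_neg at hcon
    obtain ⟨y, hyF, hy⟩ := (infDist_lt_iff hFne).mp hcon
    exact absurd hy (not_lt.mpr (hkey y hyF))
  · have h := infDist_le_infDist_add_dist (x := x + ε • e1) (y := x) (s := F)
    have h2 : dist (x + ε • e1) x = ε := by
      rw [dist_eq_norm, add_sub_cancel_left, norm_smul, he1norm, mul_one,
        Real.norm_eq_abs, abs_of_pos hε]
    rw [h2] at h
    exact h
end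

section
/- Let W₀ be the principal branch of the Lambert W function. The function f(x) = 1 + |x|·W₀(1/|x|) for x ∈ ℝ \ {0}, extended by f(0) = 1, is Log-Lipschitz continuous on a neighbourhood of 0, i.e. there is C > 0 with |f(x) - f(y)| ≤ C|x-y|·log(1/|x-y|) for x, y near 0, but f is not Lipschitz at 0. -/
open Set

lemma aux_strictMono_lambert : StrictMonoOn (fun t : ℝ => t * Real.exp t) (Set.Ici (-1)) := by
  apply strictMonoOn_of_deriv_pos (convex_Ici _)
  · exact (continuous_id.mul Real.continuous_exp).continuousOn
  · intro x hx
    rw [interior_Ici, mem_Ioi] at hx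
    have h : HasDerivAt (fun t : ℝ => t * Real.exp t) ((1 + x) * Real.exp x) x := by
      have : HasDerivAt (fun t : ℝ => t * Real.exp t) (1 * Real.exp x + x * Real.exp x) x :=
        (hasDerivAt_id x).mul (Real.hasDerivAt_exp x)
      convert this using 1
      ring
    rw [h.deriv]
    have : 0 < 1 + x := by linarith
    positivity

/-- Let `W₀` be the principal branch of the Lambert W function (inverse of `t ↦ t·eᵗ` on
`[-1,∞)`). The function `f(x) = 1 + |x|·W₀(1/|x|)` (with `f(0) = 1`) is Log-Lipschitz
continuous near `0`, but is not Lipschitz at `0`. -/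
theorem lambert_cusp_logLipschitz_not_lipschitz
    (W : ℝ → ℝ)
    (hW : ∀ x : ℝ, -(Real.exp 1)⁻¹ ≤ x → -1 ≤ W x ∧ W x * Real.exp (W x) = x)
    (f : ℝ → ℝ)
    (hf : ∀ x : ℝ, x ≠ 0 → f x = 1 + |x| * W (1 / |x|)) (hf0 : f 0 = 1) :
    (∃ C > (0 : ℝ), ∃ r > (0 : ℝ), ∀ x y : ℝ, |x| < r → |y| < r →
        |f x - f y| ≤ C * |x - y| * Real.log (1 / |x - y|)) ∧
      ¬ ∃ (L : ℝ) (r : ℝ), 0 < r ∧ ∀ x : ℝ, |x| < r → |f x - f 0| ≤ L * |x| := by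
  have he : (0:ℝ) < Real.exp 1 := Real.exp_pos 1
  have he2 : (2:ℝ) ≤ Real.exp 1 := by linarith [Real.add_one_le_exp (1:ℝ)]
  have hWp : ∀ u : ℝ, 0 ≤ u → -1 ≤ W u ∧ W u * Real.exp (W u) = u := by
    intro u hu
    exact hW u (le_trans (by rw [neg_nonpos]; positivity) hu)
  have hmem : ∀ u : ℝ, 0 ≤ u → W u ∈ Set.Ici (-1 : ℝ) := fun u hu => (hWp u hu).1
  have hWnn : ∀ u : ℝ, 0 ≤ u → 0 ≤ W u := by
    intro u hu
    by_contra h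
    push_neg at h
    have h2 := (hWp u hu).2
    nlinarith [Real.exp_pos (W u)]
  -- reflection: u ≤ s * e^s  →  W u ≤ s
  have hWle : ∀ u s : ℝ, 0 ≤ u → -1 ≤ s → u ≤ s * Real.exp s → W u ≤ s := by
    intro u s hu hs h
    refine (aux_strictMono_lambert.le_iff_le (hmem u hu) hs).mp ?_
    show W u * Real.exp (W u) ≤ s * Real.exp s
    rw [(hWp u hu).2]
    exact h
  -- monotonicity of W on [0, ∞)
  have hrefl : ∀ u v : ℝ, 0 ≤ v → v ≤ u → W v ≤ W u := by
    intro u v hv hvu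
    refine (aux_strictMono_lambert.le_iff_le (hmem v hv) (hmem u (hv.trans hvu))).mp ?_
    show W v * Real.exp (W v) ≤ W u * Real.exp (W u)
    rw [(hWp v hv).2, (hWp u (hv.trans hvu)).2]
    exact hvu
  -- W u ≤ log u for u ≥ e
  have hWlog : ∀ u : ℝ, Real.exp 1 ≤ u → W u ≤ Real.log u := by
    intro u hu
    have hu0 : 0 < u := lt_of_lt_of_le he hu
    have h1 : 1 ≤ Real.log u := by rw [Real.le_log_iff_exp_le hu0]; exact hu
    refine hWle u _ hu0.le (by linarith) ?_
    rw [Real.exp_log hu0]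
    nlinarith
  -- W u ≤ W v + log (u / v) for 1 ≤ v ≤ u
  have hWdiff : ∀ u v : ℝ, 1 ≤ v → v ≤ u → W u ≤ W v + Real.log (u / v) := by
    intro u v h1 hvu
    have hv0 : 0 < v := lt_of_lt_of_le one_pos h1
    have hu0 : 0 < u := hv0.trans_le hvu
    have hWv : 0 ≤ W v := hWnn v hv0.le
    have hlog : 0 ≤ Real.log (u / v) := Real.log_nonneg (by rw [le_div_iff₀ hv0]; linarith)
    refine hWle u _ hu0.le (by linarith) ?_
    rw [Real.exp_add, Real.exp_log (by positivity)]
    have hv2 := (hWp v hv0.le).2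
    have hpos : (0:ℝ) < Real.exp (W v) * (u / v) := by positivity
    have e1 : W v * (Real.exp (W v) * (u / v)) = u := by
      rw [← mul_assoc, hv2]; field_simp
    nlinarith [mul_nonneg hlog hpos.le]
  -- W u > M when u > M e^M, M ≥ 0
  have hWbig : ∀ M u : ℝ, 0 ≤ M → M * Real.exp M < u → M < W u := by
    intro M u hM h
    by_contra hc
    push_neg at hc
    have hu0 : 0 ≤ u := le_trans (by positivity) h.le
    have h2 : W u * Real.exp (W u) ≤ M * Real.exp M :=
      aux_strictMono_lambert.monotoneOn (hmem u hu0) (by simpa using by linarith : M ∈ Set.Ici (-1:ℝ)) hc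
    rw [(hWp u hu0).2] at h2
    linarith
  -- lower bound for log (1/t) when 0 < t ≤ e⁻¹
  have hlog1 : ∀ t : ℝ, 0 < t → t ≤ (Real.exp 1)⁻¹ → 1 ≤ Real.log (1 / t) := by
    intro t ht0 ht
    rw [Real.le_log_iff_exp_le (by positivity)]
    have h3 := one_div_le_one_div_of_le ht0 (show t ≤ 1 / Real.exp 1 by rw [one_div]; exact ht)
    rwa [one_div_one_div] at h3
  -- monotonicity of t ↦ t log (1/t) on [0, e⁻¹]
  have tlog : ∀ s t : ℝ, 0 ≤ s → s ≤ t → t ≤ (Real.exp 1)⁻¹ →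
      s * Real.log (1 / s) ≤ t * Real.log (1 / t) := by
    intro s t hs hst ht
    rcases eq_or_lt_of_le hs with h0 | hs0
    · rw [← h0, zero_mul]
      rcases eq_or_lt_of_le (h0.le.trans hst) with h1 | ht0
      · rw [← h1, zero_mul]
      · exact mul_nonneg ht0.le (by linarith [hlog1 t ht0 ht])
    · have ht0 : 0 < t := hs0.trans_le hst
      have hlt : 1 ≤ Real.log (1 / t) := hlog1 t ht0 ht
      have hsplit : Real.log (1 / s) = Real.log (1 / t) + Real.log (t / s) := by
        rw [← Real.log_mul (by positivity) (by positivity)]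
        congr 1
        field_simp
      have hts : Real.log (t / s) ≤ t / s - 1 := Real.log_le_sub_one_of_pos (by positivity)
      have e1 : s * (t / s - 1) = t - s := by field_simp
      calc s * Real.log (1 / s) = s * Real.log (1 / t) + s * Real.log (t / s) := by
            rw [hsplit]; ring
        _ ≤ s * Real.log (1 / t) + (t - s) := by
            have := mul_le_mul_of_nonneg_left hts hs
            linarith [e1]
        _ ≤ s * Real.log (1 / t) + (t - s) * Real.log (1 / t) := by nlinarith
        _ = t * Real.log (1 / t) := by ring
  -- key estimate
  have key : ∀ a b : ℝ, 0 ≤ a → a ≤ b → b ≤ (Real.exp 1)⁻¹ →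
      |b * W (1 / b) - a * W (1 / a)| ≤ (b - a) * Real.log (1 / (b - a)) := by
    intro a b ha hab hb
    rcases eq_or_lt_of_le hab with rfl | hab'
    · simp
    · have hd0 : (0:ℝ) < b - a := by linarith
      have hb0 : 0 < b := lt_of_le_of_lt ha hab'
      have hdb : b - a ≤ b := by linarith
      have hde : b - a ≤ (Real.exp 1)⁻¹ := hdb.trans hb
      have hWb0 : 0 ≤ W (1 / b) := hWnn _ (by positivity)
      have hinvb : Real.exp 1 ≤ 1 / b := by
        have h3 := one_div_le_one_div_of_le hb0 (show b ≤ 1 / Real.exp 1 by rw [one_div]; exact hb)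
        rwa [one_div_one_div] at h3
      have hWblog : W (1 / b) ≤ Real.log (1 / b) := hWlog _ hinvb
      have hlogbd : Real.log (1 / b) ≤ Real.log (1 / (b - a)) :=
        Real.log_le_log (by positivity) (one_div_le_one_div_of_le hd0 hdb)
      have hlogd1 : 1 ≤ Real.log (1 / (b - a)) := hlog1 _ hd0 hde
      rw [abs_sub_le_iff]
      constructor
      · -- upper bound
        have hWab : a * W (1 / b) ≤ a * W (1 / a) := by
          rcases eq_or_lt_of_le ha with rfl | ha0
          · simp
          · exact mul_le_mul_of_nonneg_left
              (hrefl _ _ (by positivity) (one_div_le_one_div_of_le ha0 hab)) ha0.le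
        have h4 : (b - a) * W (1 / b) ≤ (b - a) * Real.log (1 / (b - a)) := by
          calc (b - a) * W (1 / b) ≤ (b - a) * Real.log (1 / b) :=
                mul_le_mul_of_nonneg_left hWblog hd0.le
            _ ≤ (b - a) * Real.log (1 / (b - a)) :=
                mul_le_mul_of_nonneg_left hlogbd hd0.le
        nlinarith
      · -- lower bound
        have hdW : 0 ≤ (b - a) * W (1 / b) := mul_nonneg hd0.le hWb0
        rcases eq_or_lt_of_le ha with rfl | ha0
        · have h7 : (b - 0) * 1 ≤ (b - 0) * Real.log (1 / (b - 0)) :=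
            mul_le_mul_of_nonneg_left hlogd1 hd0.le
          nlinarith [mul_nonneg hb0.le hWb0]
        · have h1a : 1 ≤ 1 / b := by
            calc (1:ℝ) ≤ Real.exp 1 := by linarith
              _ ≤ 1 / b := hinvb
          have hdiff := hWdiff (1 / a) (1 / b) h1a (one_div_le_one_div_of_le ha0 hab)
          have hba : (1 / a) / (1 / b) = b / a := by field_simp
          rw [hba] at hdiff
          have hlogba : Real.log (b / a) ≤ b / a - 1 := Real.log_le_sub_one_of_pos (by positivity)
          have e2 : a * (b / a - 1) = b - a := by field_simp
          have h5 : a * W (1 / a) ≤ a * (W (1 / b) + Real.log (b / a)) :=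
            mul_le_mul_of_nonneg_left hdiff ha0.le
          have h6 : a * Real.log (b / a) ≤ b - a := by
            calc a * Real.log (b / a) ≤ a * (b / a - 1) :=
                  mul_le_mul_of_nonneg_left hlogba ha0.le
              _ = b - a := e2
          have h7 : b - a ≤ (b - a) * Real.log (1 / (b - a)) := by nlinarith
          nlinarith
  -- formula for f valid everywhere
  have hfall : ∀ z : ℝ, f z = 1 + |z| * W (1 / |z|) := by
    intro z
    rcases eq_or_ne z 0 with rfl | hz
    · simp [hf0]
    · exact hf z hz
  constructor
  · -- log-Lipschitz part
    refine ⟨1, one_pos, (2 * Real.exp 1)⁻¹, by positivity, ?_⟩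
    have main2 : ∀ x y : ℝ, |x| < (2 * Real.exp 1)⁻¹ → |y| < (2 * Real.exp 1)⁻¹ → |y| ≤ |x| →
        |f x - f y| ≤ 1 * |x - y| * Real.log (1 / |x - y|) := by
      intro x y hx hy hyx
      have hhalf : (2 * Real.exp 1)⁻¹ + (2 * Real.exp 1)⁻¹ ≤ (Real.exp 1)⁻¹ := by
        have he9 : (2 * Real.exp 1)⁻¹ + (2 * Real.exp 1)⁻¹ = (Real.exp 1)⁻¹ := by
          field_simp
          ring
        linarith
      have hbe : |x| ≤ (Real.exp 1)⁻¹ := by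
        have : (0:ℝ) < (2 * Real.exp 1)⁻¹ := by positivity
        linarith
      have h1 := key |y| |x| (abs_nonneg y) hyx hbe
      have h2 : |x| - |y| ≤ |x - y| := abs_sub_abs_le_abs_sub x y
      have h3 : |x - y| ≤ (Real.exp 1)⁻¹ := by
        have h4 : |x - y| ≤ |x| + |y| := by
          simpa [sub_eq_add_neg] using abs_add_le x (-y)
        linarith
      have h5 := tlog (|x| - |y|) (|x - y|) (by linarith) h2 h3
      rw [hfall x, hfall y]
      have e5 : 1 + |x| * W (1 / |x|) - (1 + |y| * W (1 / |y|)) =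
          |x| * W (1 / |x|) - |y| * W (1 / |y|) := by ring
      rw [e5]
      calc |(|x| * W (1 / |x|) - |y| * W (1 / |y|))|
          ≤ (|x| - |y|) * Real.log (1 / (|x| - |y|)) := h1
        _ ≤ |x - y| * Real.log (1 / |x - y|) := h5
        _ = 1 * |x - y| * Real.log (1 / |x - y|) := by ring
    intro x y hx hy
    rcases le_total |y| |x| with h | h
    · exact main2 x y hx hy h
    · have h6 := main2 y x hy hx h
      rw [abs_sub_comm (f x) (f y), abs_sub_comm x y]
      exact h6
  · -- not Lipschitz at 0
    rintro ⟨L, r, hr, hLr⟩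
    set M : ℝ := max L 1 with hMdef
    have hM1 : 1 ≤ M := le_max_right _ _
    have hML : L ≤ M := le_max_left _ _
    have hM0 : 0 ≤ M := by linarith
    have hMe : (0:ℝ) < M * Real.exp M := by positivity
    set x : ℝ := min (r / 2) ((M * Real.exp M)⁻¹ / 2) with hxdef
    have hx0 : 0 < x := lt_min (by linarith) (by positivity)
    have hxabs : |x| = x := abs_of_pos hx0
    have hxr : |x| < r := by
      rw [hxabs]
      calc x ≤ r / 2 := min_le_left _ _
        _ < r := by linarith
    have hxM : M * Real.exp M < 1 / x := by
      have h8 : x < (M * Real.exp M)⁻¹ := by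
        calc x ≤ (M * Real.exp M)⁻¹ / 2 := min_le_right _ _
          _ < (M * Real.exp M)⁻¹ := by
            have : (0:ℝ) < (M * Real.exp M)⁻¹ := by positivity
            linarith
      have h9 := one_div_lt_one_div_of_lt hx0 h8
      rwa [one_div, inv_inv] at h9
    have hWx : M < W (1 / x) := hWbig M (1 / x) hM0 hxM
    have hfx : f x - f 0 = x * W (1 / x) := by
      rw [hfall x, hf0, hxabs]
      ring
    have hcon := hLr x hxr
    rw [hfx, hxabs] at hcon
    have habs : |x * W (1 / x)| = x * W (1 / x) :=
      abs_of_nonneg (mul_nonneg hx0.le (by linarith))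
    rw [habs] at hcon
    nlinarith
end
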